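/- Let A, E ∈ ℂ^{n×n} be Hermitian matrices such that the pencil L(s) = A + sE is regular, and let λ₁, …, λ_{n+1} ∈ ℂ be pairwise distinct non-real numbers with A + λ_j E invertible for each j. For each j set M_j = (A + λ_j E)^{−1} and define the Hermitian 2n×2n matrices G_j = [[M_jᴴM_j, λ_j M_jᴴM_j], [conj(λ_j) M_jᴴM_j, |λ_j|² M_jᴴM_j]], H_{1j} = i·[[M_j − M_jᴴ, λ_j M_j], [−conj(λ_j) M_jᴴ, 0]], and H_{2j} = i·[[0, −M_jᴴ], [M_j, λ_j M_j − conj(λ_j) M_jᴴ]]. Then the Hermitian structured distance to singularity satisfies δ^{Herm}(A,E)² ≥ max_{j=1,…,n+1} ( inf_{t₀,t₁ ∈ ℝ} λ_max(G_j + t₀ H_{1j} + t₁ H_{2j}) )^{−1}, where δ^{Herm}(A,E) := inf{ √(‖Δ_A‖² + ‖Δ_E‖²) : Δ_A, Δ_E Hermitian, det((A − Δ_A) + λ(E − Δ_E)) = 0 for all λ ∈ ℂ }. -/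

import Mathlib

open Matrix

set_option maxHeartbeats 1000000
set_option synthInstance.maxHeartbeats 400000

/-- The spectral norm (ℓ² operator norm) of a complex matrix. -/
noncomputable def specNorm {k : Type*} [Fintype k] [DecidableEq k]
    (X : Matrix k k ℂ) : ℝ :=
  ‖Matrix.toEuclideanCLM (𝕜 := ℂ) X‖

/-- The largest eigenvalue of a Hermitian matrix (junk value `0` otherwise). -/
noncomputable def lamMax {k : Type*} [Fintype k] [DecidableEq k]
    (H : Matrix k k ℂ) : ℝ :=
  if h : H.IsHermitian then ⨆ i, h.eigenvalues i else 0

/-- `G_j = [[MᴴM, λMᴴM], [λ̄MᴴM, |λ|²MᴴM]]` with `M = (A + λE)⁻¹`. -/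
noncomputable def Gmat {n : ℕ} (A E : Matrix (Fin n) (Fin n) ℂ) (μ : ℂ) :
    Matrix (Fin n ⊕ Fin n) (Fin n ⊕ Fin n) ℂ :=
  Matrix.fromBlocks
    (((A + μ • E)⁻¹)ᴴ * (A + μ • E)⁻¹)
    (μ • (((A + μ • E)⁻¹)ᴴ * (A + μ • E)⁻¹))
    ((starRingEnd ℂ μ) • (((A + μ • E)⁻¹)ᴴ * (A + μ • E)⁻¹))
    ((starRingEnd ℂ μ * μ) • (((A + μ • E)⁻¹)ᴴ * (A + μ • E)⁻¹))

/-- `H_{1j} = i·[[M − Mᴴ, λM], [−λ̄Mᴴ, 0]]` with `M = (A + λE)⁻¹`. -/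
noncomputable def H1mat {n : ℕ} (A E : Matrix (Fin n) (Fin n) ℂ) (μ : ℂ) :
    Matrix (Fin n ⊕ Fin n) (Fin n ⊕ Fin n) ℂ :=
  Complex.I • Matrix.fromBlocks
    ((A + μ • E)⁻¹ - ((A + μ • E)⁻¹)ᴴ)
    (μ • (A + μ • E)⁻¹)
    (-((starRingEnd ℂ μ) • ((A + μ • E)⁻¹)ᴴ))
    0

/-- `H_{2j} = i·[[0, −Mᴴ], [M, λM − λ̄Mᴴ]]` with `M = (A + λE)⁻¹`. -/
noncomputable def H2mat {n : ℕ} (A E : Matrix (Fin n) (Fin n) ℂ) (μ : ℂ) :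
    Matrix (Fin n ⊕ Fin n) (Fin n ⊕ Fin n) ℂ :=
  Complex.I • Matrix.fromBlocks
    0
    (-(((A + μ • E)⁻¹)ᴴ))
    ((A + μ • E)⁻¹)
    (μ • (A + μ • E)⁻¹ - (starRingEnd ℂ μ) • ((A + μ • E)⁻¹)ᴴ)

section Aux

lemma conj_dot {m : Type*} [Fintype m] (M : Matrix m m ℂ) (a b : m → ℂ) :
    star a ⬝ᵥ (Mᴴ *ᵥ b) = star (star b ⬝ᵥ (M *ᵥ a)) := by
  rw [star_dotProduct, star_mulVec, conjTranspose_conjTranspose, ← dotProduct_mulVec]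

lemma dot_hermMul {m : Type*} [Fintype m] (M : Matrix m m ℂ) (a b : m → ℂ) :
    star a ⬝ᵥ ((Mᴴ * M) *ᵥ b) = star (M *ᵥ a) ⬝ᵥ (M *ᵥ b) := by
  rw [← mulVec_mulVec, star_mulVec, dotProduct_mulVec]

lemma real_dot_herm {m : Type*} [Fintype m] {D : Matrix m m ℂ} (hD : D.IsHermitian)
    (x : m → ℂ) : star (D *ᵥ x) ⬝ᵥ x = star (star (D *ᵥ x) ⬝ᵥ x) := by
  nth_rewrite 1 [star_mulVec, ← dotProduct_mulVec, hD.eq]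
  rw [star_dotProduct, star_mulVec, hD.eq, ← dotProduct_mulVec]

lemma rayleigh {m : Type*} [Fintype m] [DecidableEq m] {H : Matrix m m ℂ}
    (hH : H.IsHermitian) (w : m → ℂ) :
    (star w ⬝ᵥ (H *ᵥ w)).re ≤ lamMax H * (star w ⬝ᵥ w).re := by
  classical
  obtain ⟨U, hUmem, hUeq⟩ : ∃ U : Matrix m m ℂ, U ∈ Matrix.unitaryGroup m ℂ ∧
      U = (hH.eigenvectorUnitary : Matrix m m ℂ) :=
    ⟨_, hH.eigenvectorUnitary.2, rfl⟩
  have hUst : U * star U = 1 := (Matrix.mem_unitaryGroup_iff).mp hUmem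
  obtain ⟨c, hc⟩ : ∃ c : m → ℂ, c = (star U) *ᵥ w := ⟨_, rfl⟩
  have hstarc : star c = star w ᵥ* U := by
    rw [hc, star_mulVec, star_eq_conjTranspose, conjTranspose_conjTranspose]
  have key : ∀ N : Matrix m m ℂ, star w ⬝ᵥ ((U * N * star U) *ᵥ w) = star c ⬝ᵥ (N *ᵥ c) := by
    intro N
    rw [mul_assoc, ← mulVec_mulVec, ← mulVec_mulVec, dotProduct_mulVec (star w) U, ← hstarc,
      ← hc]
  have h2 : star w ⬝ᵥ w = star c ⬝ᵥ c := by
    have := key 1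
    rwa [mul_one, hUst, one_mulVec, one_mulVec] at this
  have h1 : star w ⬝ᵥ (H *ᵥ w) =
      star c ⬝ᵥ ((diagonal (RCLike.ofReal ∘ hH.eigenvalues) : Matrix m m ℂ) *ᵥ c) := by
    have h := key (diagonal (RCLike.ofReal ∘ hH.eigenvalues))
    rw [hUeq] at h
    rw [← Unitary.conjStarAlgAut_apply (S := ℂ), ← hH.spectral_theorem] at h
    exact h
  rw [h1, h2]
  have hL : ∀ i, hH.eigenvalues i ≤ lamMax H := by
    intro i
    rw [lamMax, dif_pos hH]
    exact le_ciSup (Set.Finite.bddAbove (Set.finite_range _)) i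
  rw [dotProduct, dotProduct, Complex.re_sum, Complex.re_sum, Finset.mul_sum]
  apply Finset.sum_le_sum
  intro i _
  have hcc : star c i * c i = (Complex.normSq (c i) : ℂ) := by
    rw [Pi.star_apply, Complex.star_def]
    exact (Complex.normSq_eq_conj_mul_self).symm
  have hterm : star c i * ((diagonal (RCLike.ofReal ∘ hH.eigenvalues) : Matrix m m ℂ) *ᵥ c) i
      = (hH.eigenvalues i : ℂ) * (Complex.normSq (c i) : ℂ) := by
    rw [mulVec_diagonal, ← hcc]
    simp only [Function.comp_apply, RCLike.ofReal_alg, Complex.real_smul]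
    ring
  rw [hterm, hcc, ← Complex.ofReal_mul, Complex.ofReal_re, Complex.ofReal_re]
  exact mul_le_mul_of_nonneg_right (hL i) (Complex.normSq_nonneg _)

lemma dot_self_re {k : Type*} [Fintype k] (v : k → ℂ) :
    (star v ⬝ᵥ v).re = ‖(WithLp.equiv 2 (k → ℂ)).symm v‖ ^ 2 := by
  have h := EuclideanSpace.inner_eq_star_dotProduct (𝕜 := ℂ)
    ((WithLp.equiv 2 (k → ℂ)).symm v) ((WithLp.equiv 2 (k → ℂ)).symm v)
  rw [show ((WithLp.equiv 2 (k → ℂ)).symm v).ofLp = v from rfl, dotProduct_comm] at h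
  have h2 := inner_self_eq_norm_sq (𝕜 := ℂ) ((WithLp.equiv 2 (k → ℂ)).symm v)
  rw [h] at h2
  exact h2

lemma spec_bound {k : Type*} [Fintype k] [DecidableEq k] (X : Matrix k k ℂ) (x : k → ℂ) :
    (star (X *ᵥ x) ⬝ᵥ (X *ᵥ x)).re ≤ specNorm X ^ 2 * (star x ⬝ᵥ x).re := by
  rw [dot_self_re, dot_self_re]
  have happ : (WithLp.equiv 2 (k → ℂ)).symm (X *ᵥ x)
      = Matrix.toEuclideanCLM (𝕜 := ℂ) X ((WithLp.equiv 2 (k → ℂ)).symm x) := by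
    exact (Matrix.toEuclideanCLM_toLp X x).symm
  rw [happ]
  have hle := (Matrix.toEuclideanCLM (𝕜 := ℂ) X).le_opNorm ((WithLp.equiv 2 (k → ℂ)).symm x)
  calc ‖Matrix.toEuclideanCLM (𝕜 := ℂ) X ((WithLp.equiv 2 (k → ℂ)).symm x)‖ ^ 2
      ≤ (‖Matrix.toEuclideanCLM (𝕜 := ℂ) X‖ * ‖(WithLp.equiv 2 (k → ℂ)).symm x‖) ^ 2 := by
        apply pow_le_pow_left₀ (norm_nonneg _) hle
    _ = specNorm X ^ 2 * ‖(WithLp.equiv 2 (k → ℂ)).symm x‖ ^ 2 := by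
        rw [mul_pow]; rfl

lemma quad_G {m : Type*} [Fintype m] (M : Matrix m m ℂ) (μ : ℂ) (y z : m → ℂ) :
    star (Sum.elim y z) ⬝ᵥ
      (fromBlocks (Mᴴ * M) (μ • (Mᴴ * M)) ((starRingEnd ℂ μ) • (Mᴴ * M))
        ((starRingEnd ℂ μ * μ) • (Mᴴ * M)) *ᵥ Sum.elim y z)
      = star (M *ᵥ y + μ • (M *ᵥ z)) ⬝ᵥ (M *ᵥ y + μ • (M *ᵥ z)) := by
  simp only [Function.star_sumElim, fromBlocks_mulVec, sumElim_dotProduct_sumElim,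
    dotProduct_add, add_dotProduct, smul_mulVec, dotProduct_smul, smul_dotProduct,
    smul_eq_mul, star_add, star_smul, dot_hermMul, Complex.star_def, Sum.elim_comp_inl,
    Sum.elim_comp_inr]
  ring

lemma quad_H1 {m : Type*} [Fintype m] (M : Matrix m m ℂ) (μ : ℂ) (y z : m → ℂ)
    (hq : star y ⬝ᵥ (M *ᵥ y) + μ * (star y ⬝ᵥ (M *ᵥ z)) =
      (starRingEnd ℂ) (star y ⬝ᵥ (M *ᵥ y)) +
        (starRingEnd ℂ) μ * (starRingEnd ℂ) (star y ⬝ᵥ (M *ᵥ z))) :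
    star (Sum.elim y z) ⬝ᵥ
      ((Complex.I • fromBlocks (M - Mᴴ) (μ • M) (-((starRingEnd ℂ μ) • Mᴴ)) 0) *ᵥ
        Sum.elim y z) = 0 := by
  simp only [smul_mulVec, dotProduct_smul, smul_eq_mul, Function.star_sumElim,
    fromBlocks_mulVec, sumElim_dotProduct_sumElim, Sum.elim_comp_inl, Sum.elim_comp_inr,
    dotProduct_add, add_dotProduct, sub_mulVec, neg_mulVec, zero_mulVec, add_zero,
    dotProduct_sub, dotProduct_neg, conj_dot, Complex.star_def]
  linear_combination Complex.I * hq

lemma quad_H2 {m : Type*} [Fintype m] (M : Matrix m m ℂ) (μ : ℂ) (y z : m → ℂ)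
    (hp : star z ⬝ᵥ (M *ᵥ y) + μ * (star z ⬝ᵥ (M *ᵥ z)) =
      (starRingEnd ℂ) (star z ⬝ᵥ (M *ᵥ y)) +
        (starRingEnd ℂ) μ * (starRingEnd ℂ) (star z ⬝ᵥ (M *ᵥ z))) :
    star (Sum.elim y z) ⬝ᵥ
      ((Complex.I • fromBlocks 0 (-(Mᴴ)) M (μ • M - (starRingEnd ℂ μ) • Mᴴ)) *ᵥ
        Sum.elim y z) = 0 := by
  simp only [smul_mulVec, dotProduct_smul, smul_eq_mul, Function.star_sumElim,
    fromBlocks_mulVec, sumElim_dotProduct_sumElim, Sum.elim_comp_inl, Sum.elim_comp_inr,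
    dotProduct_add, add_dotProduct, sub_mulVec, neg_mulVec, zero_mulVec, zero_add, add_zero,
    dotProduct_sub, dotProduct_neg, conj_dot, Complex.star_def]
  linear_combination Complex.I * hp

lemma herm_G {n : ℕ} (A E : Matrix (Fin n) (Fin n) ℂ) (μ : ℂ) :
    (Gmat A E μ).IsHermitian := by
  unfold Gmat
  rw [Matrix.IsHermitian, fromBlocks_conjTranspose]
  simp only [conjTranspose_smul, conjTranspose_mul, conjTranspose_conjTranspose,
    Complex.star_def, _root_.map_mul, Complex.conj_conj, RingHom.id_apply]
  rw [mul_comm]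

lemma herm_H1 {n : ℕ} (A E : Matrix (Fin n) (Fin n) ℂ) (μ : ℂ) :
    (H1mat A E μ).IsHermitian := by
  unfold H1mat
  rw [Matrix.IsHermitian, conjTranspose_smul, fromBlocks_conjTranspose]
  simp only [conjTranspose_smul, conjTranspose_sub, conjTranspose_neg,
    conjTranspose_conjTranspose, conjTranspose_zero, Complex.star_def, Complex.conj_I,
    Complex.conj_conj]
  rw [neg_smul, ← smul_neg]
  congr 1
  ext (i|i) (j|j) <;> simp [Matrix.fromBlocks]

lemma herm_H2 {n : ℕ} (A E : Matrix (Fin n) (Fin n) ℂ) (μ : ℂ) :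
    (H2mat A E μ).IsHermitian := by
  unfold H2mat
  rw [Matrix.IsHermitian, conjTranspose_smul, fromBlocks_conjTranspose]
  simp only [conjTranspose_smul, conjTranspose_sub, conjTranspose_neg,
    conjTranspose_conjTranspose, conjTranspose_zero, Complex.star_def, Complex.conj_I,
    Complex.conj_conj]
  rw [neg_smul, ← smul_neg]
  congr 1
  ext (i|i) (j|j) <;> simp [Matrix.fromBlocks]

lemma herm_real_smul {m : Type*} [Fintype m] {X : Matrix m m ℂ} (hX : X.IsHermitian)
    (t : ℝ) : ((t : ℂ) • X).IsHermitian := by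
  rw [Matrix.IsHermitian, conjTranspose_smul, hX.eq, Complex.star_def, Complex.conj_ofReal]

end Aux

/-- A family of lower bounds for the Hermitian structured distance to
singularity: for pairwise distinct non-real `λ₁, …, λ_{n+1}` at which the
pencil is invertible,
`δ^Herm(A,E)² ≥ max_j (inf_{t₀,t₁ ∈ ℝ} λ_max(G_j + t₀H_{1j} + t₁H_{2j}))⁻¹`. -/
theorem hermitian_distance_to_singularity_lower_bound
    {n : ℕ} (A E : Matrix (Fin n) (Fin n) ℂ)
    (hA : A.IsHermitian) (hE : E.IsHermitian)
    (hreg : ∃ l : ℂ, (A + l • E).det ≠ 0)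
    (l : Fin (n + 1) → ℂ) (hl : Function.Injective l)
    (hnonreal : ∀ j, (l j).im ≠ 0)
    (hinv : ∀ j, IsUnit (A + l j • E)) :
    (sInf {r : ℝ | ∃ DA DE : Matrix (Fin n) (Fin n) ℂ,
        DA.IsHermitian ∧ DE.IsHermitian ∧
        (∀ μ : ℂ, ((A - DA) + μ • (E - DE)).det = 0) ∧
        r = Real.sqrt (specNorm DA ^ 2 + specNorm DE ^ 2)}) ^ 2 ≥
      ⨆ j : Fin (n + 1),
        (⨅ t₀ : ℝ, ⨅ t₁ : ℝ,
          lamMax (Gmat A E (l j) + (t₀ : ℂ) • H1mat A E (l j) +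
            (t₁ : ℂ) • H2mat A E (l j)))⁻¹ := by
  classical
  rw [ge_iff_le]
  by_cases hn : n = 0
  · subst hn
    have hlam : ∀ (H : Matrix (Fin 0 ⊕ Fin 0) (Fin 0 ⊕ Fin 0) ℂ), lamMax H = 0 := by
      intro H
      rw [lamMax]
      split
      · exact Real.iSup_of_isEmpty _
      · rfl
    have h0 : (⨆ j : Fin (0 + 1),
        (⨅ t₀ : ℝ, ⨅ t₁ : ℝ,
          lamMax (Gmat A E (l j) + (t₀ : ℂ) • H1mat A E (l j) +
            (t₁ : ℂ) • H2mat A E (l j)))⁻¹) = 0 := by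
      simp only [hlam, ciInf_const, _root_.inv_zero, ciSup_const]
    rw [h0]
    positivity
  -- main case
  have hne : Nonempty (Fin n) := Fin.pos_iff_nonempty.mp (Nat.pos_of_ne_zero hn)
  set S : Set ℝ := {r : ℝ | ∃ DA DE : Matrix (Fin n) (Fin n) ℂ,
        DA.IsHermitian ∧ DE.IsHermitian ∧
        (∀ μ : ℂ, ((A - DA) + μ • (E - DE)).det = 0) ∧
        r = Real.sqrt (specNorm DA ^ 2 + specNorm DE ^ 2)} with hSdef
  have hSne : S.Nonempty := by
    refine ⟨Real.sqrt (specNorm A ^ 2 + specNorm E ^ 2), A, E, hA, hE, fun μ => ?_, rfl⟩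
    simp [Matrix.det_zero]
  have hSnonneg : ∀ r ∈ S, 0 ≤ r := by
    rintro r ⟨DA, DE, _, _, _, rfl⟩
    exact Real.sqrt_nonneg _
  -- the key estimate
  have main : ∀ j : Fin (n + 1), ∀ DA DE : Matrix (Fin n) (Fin n) ℂ,
      DA.IsHermitian → DE.IsHermitian →
      (∀ μ : ℂ, ((A - DA) + μ • (E - DE)).det = 0) →
      0 < (⨅ t₀ : ℝ, ⨅ t₁ : ℝ,
          lamMax (Gmat A E (l j) + (t₀ : ℂ) • H1mat A E (l j) +
            (t₁ : ℂ) • H2mat A E (l j))) ∧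
      (⨅ t₀ : ℝ, ⨅ t₁ : ℝ,
          lamMax (Gmat A E (l j) + (t₀ : ℂ) • H1mat A E (l j) +
            (t₁ : ℂ) • H2mat A E (l j)))⁻¹ ≤ specNorm DA ^ 2 + specNorm DE ^ 2 := by
    intro j DA DE hDA hDE hdet
    obtain ⟨μ, hμ⟩ : ∃ μ : ℂ, μ = l j := ⟨_, rfl⟩
    obtain ⟨M, hM⟩ : ∃ M : Matrix (Fin n) (Fin n) ℂ, M = (A + μ • E)⁻¹ := ⟨_, rfl⟩
    have hdetAE : IsUnit (A + μ • E).det := by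
      rw [hμ]; exact (Matrix.isUnit_iff_isUnit_det _).mp (hinv j)
    have hMinv : M * (A + μ • E) = 1 := by rw [hM]; exact Matrix.nonsing_inv_mul _ hdetAE
    -- the perturbation is nonzero
    obtain ⟨s, hs⟩ : ∃ s : ℝ, s = specNorm DA ^ 2 + specNorm DE ^ 2 := ⟨_, rfl⟩
    have hs0 : 0 ≤ s := by rw [hs]; positivity
    have hspos : 0 < s := by
      rcases hs0.lt_or_eq with h | h
      · exact h
      · exfalso
        have hDA0 : specNorm DA = 0 := by
          have h2 : specNorm DA ^ 2 = 0 := by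
            have h3 := sq_nonneg (specNorm DE)
            have h4 := sq_nonneg (specNorm DA)
            linarith
          exact (pow_eq_zero_iff two_ne_zero).mp h2
        have hDE0 : specNorm DE = 0 := by
          have h2 : specNorm DE ^ 2 = 0 := by
            have h3 := sq_nonneg (specNorm DE)
            have h4 := sq_nonneg (specNorm DA)
            linarith
          exact (pow_eq_zero_iff two_ne_zero).mp h2
        have hDAz : DA = 0 := by
          have h5 : ‖Matrix.toEuclideanCLM (𝕜 := ℂ) DA‖ = 0 := hDA0
          have h6 : Matrix.toEuclideanCLM (𝕜 := ℂ) DA = 0 :=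
            (ContinuousLinearMap.opNorm_zero_iff _).mp h5
          have h2 : Matrix.toEuclideanCLM (𝕜 := ℂ) DA
              = Matrix.toEuclideanCLM (𝕜 := ℂ) 0 := by rw [h6, map_zero]
          exact (Matrix.toEuclideanCLM (𝕜 := ℂ)).injective h2
        have hDEz : DE = 0 := by
          have h5 : ‖Matrix.toEuclideanCLM (𝕜 := ℂ) DE‖ = 0 := hDE0
          have h6 : Matrix.toEuclideanCLM (𝕜 := ℂ) DE = 0 :=
            (ContinuousLinearMap.opNorm_zero_iff _).mp h5
          have h2 : Matrix.toEuclideanCLM (𝕜 := ℂ) DE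
              = Matrix.toEuclideanCLM (𝕜 := ℂ) 0 := by rw [h6, map_zero]
          exact (Matrix.toEuclideanCLM (𝕜 := ℂ)).injective h2
        have hzero := hdet μ
        rw [hDAz, hDEz, sub_zero, sub_zero] at hzero
        exact hdetAE.ne_zero hzero
    -- null vector
    obtain ⟨x, hx0, hxnull⟩ := (Matrix.exists_mulVec_eq_zero_iff).mpr (hdet μ)
    have h1 : (A + μ • E) *ᵥ x = DA *ᵥ x + μ • (DE *ᵥ x) := by
      have hz := hxnull
      rw [add_mulVec, sub_mulVec, smul_mulVec, sub_mulVec, smul_sub] at hz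
      rw [add_mulVec, smul_mulVec]
      have hrw : (A *ᵥ x - DA *ᵥ x + (μ • (E *ᵥ x) - μ • (DE *ᵥ x)))
          = (A *ᵥ x + μ • (E *ᵥ x)) - (DA *ᵥ x + μ • (DE *ᵥ x)) := by abel
      rw [hrw] at hz
      exact sub_eq_zero.mp hz
    have hxM : x = M *ᵥ (DA *ᵥ x) + μ • (M *ᵥ (DE *ᵥ x)) := by
      have h2 : M *ᵥ ((A + μ • E) *ᵥ x) = M *ᵥ (DA *ᵥ x + μ • (DE *ᵥ x)) := by rw [h1]
      rw [mulVec_mulVec, hMinv, one_mulVec, mulVec_add, mulVec_smul] at h2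
      exact h2
    -- real quadratic forms
    have hy' : star (DA *ᵥ x) ⬝ᵥ (M *ᵥ (DA *ᵥ x)) + μ * (star (DA *ᵥ x) ⬝ᵥ (M *ᵥ (DE *ᵥ x)))
        = star (DA *ᵥ x) ⬝ᵥ x := by
      have h2 : star (DA *ᵥ x) ⬝ᵥ (M *ᵥ (DA *ᵥ x) + μ • (M *ᵥ (DE *ᵥ x)))
          = star (DA *ᵥ x) ⬝ᵥ x := by rw [← hxM]
      rw [← h2, dotProduct_add, dotProduct_smul, smul_eq_mul]
    have hyreal : star (DA *ᵥ x) ⬝ᵥ x = (starRingEnd ℂ) (star (DA *ᵥ x) ⬝ᵥ x) := by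
      have h := real_dot_herm hDA x
      rwa [Complex.star_def] at h
    have hq : star (DA *ᵥ x) ⬝ᵥ (M *ᵥ (DA *ᵥ x)) + μ * (star (DA *ᵥ x) ⬝ᵥ (M *ᵥ (DE *ᵥ x)))
        = (starRingEnd ℂ) (star (DA *ᵥ x) ⬝ᵥ (M *ᵥ (DA *ᵥ x))) +
          (starRingEnd ℂ) μ * (starRingEnd ℂ) (star (DA *ᵥ x) ⬝ᵥ (M *ᵥ (DE *ᵥ x))) := by
      rw [← _root_.map_mul, ← _root_.map_add, hy']
      exact hyreal
    have hz' : star (DE *ᵥ x) ⬝ᵥ (M *ᵥ (DA *ᵥ x)) + μ * (star (DE *ᵥ x) ⬝ᵥ (M *ᵥ (DE *ᵥ x)))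
        = star (DE *ᵥ x) ⬝ᵥ x := by
      have h2 : star (DE *ᵥ x) ⬝ᵥ (M *ᵥ (DA *ᵥ x) + μ • (M *ᵥ (DE *ᵥ x)))
          = star (DE *ᵥ x) ⬝ᵥ x := by rw [← hxM]
      rw [← h2, dotProduct_add, dotProduct_smul, smul_eq_mul]
    have hzreal : star (DE *ᵥ x) ⬝ᵥ x = (starRingEnd ℂ) (star (DE *ᵥ x) ⬝ᵥ x) := by
      have h := real_dot_herm hDE x
      rwa [Complex.star_def] at h
    have hp : star (DE *ᵥ x) ⬝ᵥ (M *ᵥ (DA *ᵥ x)) + μ * (star (DE *ᵥ x) ⬝ᵥ (M *ᵥ (DE *ᵥ x)))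
        = (starRingEnd ℂ) (star (DE *ᵥ x) ⬝ᵥ (M *ᵥ (DA *ᵥ x))) +
          (starRingEnd ℂ) μ * (starRingEnd ℂ) (star (DE *ᵥ x) ⬝ᵥ (M *ᵥ (DE *ᵥ x))) := by
      rw [← _root_.map_mul, ← _root_.map_add, hz']
      exact hzreal
    -- norms
    have hxx : 0 < (star x ⬝ᵥ x).re := by
      rw [dot_self_re]
      have hx' : (WithLp.equiv 2 (Fin n → ℂ)).symm x ≠ 0 := by
        intro h
        apply hx0
        have := congrArg (WithLp.equiv 2 (Fin n → ℂ)) h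
        simpa using this
      have := norm_pos_iff.mpr hx'
      positivity
    have hww0 : 0 ≤ (star (Sum.elim (DA *ᵥ x) (DE *ᵥ x)) ⬝ᵥ Sum.elim (DA *ᵥ x) (DE *ᵥ x)).re := by
      rw [dot_self_re]
      positivity
    have hw : (star (Sum.elim (DA *ᵥ x) (DE *ᵥ x)) ⬝ᵥ Sum.elim (DA *ᵥ x) (DE *ᵥ x)).re
        = (star (DA *ᵥ x) ⬝ᵥ (DA *ᵥ x)).re + (star (DE *ᵥ x) ⬝ᵥ (DE *ᵥ x)).re := by
      rw [Function.star_sumElim, sumElim_dotProduct_sumElim, Complex.add_re]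
    have hwle : (star (Sum.elim (DA *ᵥ x) (DE *ᵥ x)) ⬝ᵥ Sum.elim (DA *ᵥ x) (DE *ᵥ x)).re
        ≤ s * (star x ⬝ᵥ x).re := by
      rw [hw, hs]
      have hb1 := spec_bound DA x
      have hb2 := spec_bound DE x
      have hexp : (specNorm DA ^ 2 + specNorm DE ^ 2) * (star x ⬝ᵥ x).re
          = specNorm DA ^ 2 * (star x ⬝ᵥ x).re + specNorm DE ^ 2 * (star x ⬝ᵥ x).re := by ring
      rw [hexp]
      linarith only [hb1, hb2]
    -- lower bound on lamMax for all t₀ t₁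
    have hb : ∀ t₀ t₁ : ℝ, 1 / s ≤
        lamMax (Gmat A E (l j) + (t₀ : ℂ) • H1mat A E (l j) + (t₁ : ℂ) • H2mat A E (l j)) := by
      intro t₀ t₁
      have hermK : (Gmat A E (l j) + (t₀ : ℂ) • H1mat A E (l j) +
          (t₁ : ℂ) • H2mat A E (l j)).IsHermitian :=
        ((herm_G A E (l j)).add (herm_real_smul (herm_H1 A E (l j)) t₀)).add
          (herm_real_smul (herm_H2 A E (l j)) t₁)
      have quad : star (Sum.elim (DA *ᵥ x) (DE *ᵥ x)) ⬝ᵥ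
          ((Gmat A E (l j) + (t₀ : ℂ) • H1mat A E (l j) + (t₁ : ℂ) • H2mat A E (l j)) *ᵥ
            Sum.elim (DA *ᵥ x) (DE *ᵥ x)) = star x ⬝ᵥ x := by
        rw [add_mulVec, add_mulVec, dotProduct_add, dotProduct_add,
          smul_mulVec ((t₀ : ℂ)), dotProduct_smul, smul_mulVec ((t₁ : ℂ)),
          dotProduct_smul]
        rw [← hμ] at *
        unfold Gmat H1mat H2mat
        rw [← hM]
        rw [quad_G M μ (DA *ᵥ x) (DE *ᵥ x), quad_H1 M μ (DA *ᵥ x) (DE *ᵥ x) hq,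
          quad_H2 M μ (DA *ᵥ x) (DE *ᵥ x) hp]
        rw [smul_zero, smul_zero, add_zero, add_zero, ← hxM]
      have hray := rayleigh hermK (Sum.elim (DA *ᵥ x) (DE *ᵥ x))
      rw [quad] at hray
      obtain ⟨L, hL⟩ : ∃ L : ℝ, L = lamMax (Gmat A E (l j) + (t₀ : ℂ) • H1mat A E (l j) +
          (t₁ : ℂ) • H2mat A E (l j)) := ⟨_, rfl⟩
      rw [← hL] at hray ⊢
      have hlam0 : 0 ≤ L := by
        rcases le_or_gt 0 L with h | h
        · exact h
        · exfalso
          have h2 := mul_nonneg (neg_nonneg.mpr h.le) hww0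
          linarith only [h2, hray, hxx]
      have hfin : (star x ⬝ᵥ x).re ≤ L * (s * (star x ⬝ᵥ x).re) :=
        hray.trans (mul_le_mul_of_nonneg_left hwle hlam0)
      rw [div_le_iff₀ hspos]
      have h1' : (star x ⬝ᵥ x).re * 1 ≤ (star x ⬝ᵥ x).re * (L * s) := by
        rw [mul_one]
        calc (star x ⬝ᵥ x).re ≤ L * (s * (star x ⬝ᵥ x).re) := hfin
          _ = (star x ⬝ᵥ x).re * (L * s) := by ring
      exact le_of_mul_le_mul_left h1' hxx
    have hcinf : 1 / s ≤ ⨅ t₀ : ℝ, ⨅ t₁ : ℝ,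
        lamMax (Gmat A E (l j) + (t₀ : ℂ) • H1mat A E (l j) + (t₁ : ℂ) • H2mat A E (l j)) :=
      le_ciInf fun t₀ => le_ciInf fun t₁ => hb t₀ t₁
    have hcpos : 0 < ⨅ t₀ : ℝ, ⨅ t₁ : ℝ,
        lamMax (Gmat A E (l j) + (t₀ : ℂ) • H1mat A E (l j) + (t₁ : ℂ) • H2mat A E (l j)) :=
      lt_of_lt_of_le (by positivity) hcinf
    refine ⟨hcpos, ?_⟩
    have := inv_anti₀ (show (0:ℝ) < 1 / s by positivity) hcinf
    rw [one_div, inv_inv] at this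
    rw [hs] at this
    exact this
  -- conclude
  apply ciSup_le
  intro j
  have hSne' := hSne
  obtain ⟨r₀, hr₀⟩ := hSne'
  obtain ⟨DA₀, DE₀, hDA₀, hDE₀, hdet₀, hr₀eq⟩ := hr₀
  have hpos := (main j DA₀ DE₀ hDA₀ hDE₀ hdet₀).1
  have hinv0 : 0 ≤ (⨅ t₀ : ℝ, ⨅ t₁ : ℝ,
      lamMax (Gmat A E (l j) + (t₀ : ℂ) • H1mat A E (l j) +
        (t₁ : ℂ) • H2mat A E (l j)))⁻¹ := le_of_lt (inv_pos.mpr hpos)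
  have hsqrt : Real.sqrt ((⨅ t₀ : ℝ, ⨅ t₁ : ℝ,
      lamMax (Gmat A E (l j) + (t₀ : ℂ) • H1mat A E (l j) +
        (t₁ : ℂ) • H2mat A E (l j)))⁻¹) ≤ sInf S := by
    apply le_csInf hSne
    rintro r ⟨DA, DE, hDA, hDE, hdet, rfl⟩
    have h2 := (main j DA DE hDA hDE hdet).2
    have h3 : (⨅ t₀ : ℝ, ⨅ t₁ : ℝ,
        lamMax (Gmat A E (l j) + (t₀ : ℂ) • H1mat A E (l j) +
          (t₁ : ℂ) • H2mat A E (l j)))⁻¹ ≤ (Real.sqrt (specNorm DA ^ 2 + specNorm DE ^ 2)) ^ 2 := by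
      rw [Real.sq_sqrt (by positivity)]
      exact h2
    have := Real.sqrt_le_sqrt h3
    rwa [Real.sqrt_sq (Real.sqrt_nonneg _)] at this
  calc (⨅ t₀ : ℝ, ⨅ t₁ : ℝ,
      lamMax (Gmat A E (l j) + (t₀ : ℂ) • H1mat A E (l j) +
        (t₁ : ℂ) • H2mat A E (l j)))⁻¹
      = (Real.sqrt ((⨅ t₀ : ℝ, ⨅ t₁ : ℝ,
        lamMax (Gmat A E (l j) + (t₀ : ℂ) • H1mat A E (l j) +
          (t₁ : ℂ) • H2mat A E (l j)))⁻¹)) ^ 2 := (Real.sq_sqrt hinv0).symm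
    _ ≤ (sInf S) ^ 2 := by
        apply pow_le_pow_left₀ (Real.sqrt_nonneg _) hsqrt
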